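/- Suppose for each state index s ∈ {1,…,n} and each agent i there exist matrices T, L (with T = I − ΓC^ℓ for some Γ) such that the s-th row of TA − LC^ℓ has ℓ₁ norm < 1, where ℓ = ℓ(i,s) is some agent in the d-hop neighborhood of i. Then the block-selected matrix H*Â, whose row (corresponding to agent i, state s) is row s of Â^{ℓ(i,s)}, satisfies ‖H*Â‖_∞ < 1 and hence ρ(H*Â) < 1. -/
import Mathlib

open Matrix

noncomputable def specRad {ι : Type*} [Fintype ι] [DecidableEq ι]
    (M : Matrix ι ι ℝ) : ENNReal :=
  spectralRadius ℂ (M.map (Complex.ofReal))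

noncomputable def matPos {n : ℕ} (M : Matrix (Fin n) (Fin n) ℝ) : Matrix (Fin n) (Fin n) ℝ :=
  fun i j => max (M i j) 0

noncomputable def matNeg {n : ℕ} (M : Matrix (Fin n) (Fin n) ℝ) : Matrix (Fin n) (Fin n) ℝ :=
  matPos M - M

noncomputable def hatMat {n : ℕ} (M : Matrix (Fin n) (Fin n) ℝ) :
    Matrix (Fin n ⊕ Fin n) (Fin n ⊕ Fin n) ℝ :=
  Matrix.fromBlocks (matPos M) (matNeg M) (matNeg M) (matPos M)

lemma abskey (x : ℝ) : |max x 0| + |max x 0 - x| = |x| := by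
  rcases le_total x 0 with h | h
  · rw [max_eq_right h]; simp [abs_of_nonpos h]
  · rw [max_eq_left h, abs_of_nonneg h, sub_self, abs_zero, add_zero]

attribute [local instance] Matrix.linftyOpNormedRing Matrix.linftyOpNormedAlgebra

theorem stmt15 {n N : ℕ} {m : Fin N → ℕ}
    (A : Matrix (Fin n) (Fin n) ℝ)
    (T : Fin N → Matrix (Fin n) (Fin n) ℝ)
    (Γ L : (j : Fin N) → Matrix (Fin n) (Fin (m j)) ℝ)
    (C : (j : Fin N) → Matrix (Fin (m j)) (Fin n) ℝ)
    (hT : ∀ j, T j = 1 - Γ j * C j)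
    (Atil : Fin N → Matrix (Fin n) (Fin n) ℝ)
    (hAtil : ∀ j, Atil j = T j * A - L j * C j)
    (Nd : Fin N → Finset (Fin N))
    (ℓ : Fin N → Fin n → Fin N)
    (hℓ : ∀ i s, ℓ i s ∈ Nd i)
    (hrow : ∀ i s, (∑ j, |Atil (ℓ i s) s j|) < 1)
    (Ahat : Matrix ((Fin n ⊕ Fin n) × Fin N) ((Fin n ⊕ Fin n) × Fin N) ℝ)
    (hAhat : Ahat = Matrix.blockDiagonal (fun j => hatMat (Atil j)))
    (Hs : Matrix ((Fin n ⊕ Fin n) × Fin N) ((Fin n ⊕ Fin n) × Fin N) ℝ)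
    (hHs : ∀ p q, Hs p q =
      if q.2 = ℓ p.2 (Sum.elim id id p.1) ∧ q.1 = p.1 then 1 else 0) :
    (∀ p, (∑ q, |(Hs * Ahat) p q|) < 1) ∧ specRad (Hs * Ahat) < 1 := by
  have key : ∀ p, (∑ q, |(Hs * Ahat) p q|) < 1 := by
    rintro ⟨u, i⟩
    obtain ⟨s, hs⟩ : ∃ s, Sum.elim id id u = s := ⟨_, rfl⟩
    obtain ⟨j0, hj0⟩ : ∃ j0, ℓ i s = j0 := ⟨_, rfl⟩
    have hentry : ∀ q, (Hs * Ahat) (u, i) q = Ahat (u, j0) q := by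
      intro q
      rw [Matrix.mul_apply, Finset.sum_eq_single (u, j0)]
      · rw [hHs]; simp [hs, hj0]
      · rintro ⟨v, j⟩ _ hne
        have : ¬(j = ℓ i (Sum.elim id id u) ∧ v = u) := by
          rintro ⟨h1, rfl⟩; exact hne (by simp [h1, hs, hj0])
        rw [hHs]
        simp [this]
      · intro h; exact absurd (Finset.mem_univ _) h
    have hsum : (∑ q, |(Hs * Ahat) (u, i) q|) = ∑ j, |Atil j0 s j| := by
      simp only [hentry]
      simp only [hAhat]
      rw [Fintype.sum_prod_type]
      have h1 : ∀ q1 : Fin n ⊕ Fin n,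
          (∑ q2 : Fin N, |Matrix.blockDiagonal (fun j => hatMat (Atil j)) (u, j0) (q1, q2)|)
          = |hatMat (Atil j0) u q1| := by
        intro q1
        rw [Finset.sum_eq_single j0]
        · simp [Matrix.blockDiagonal_apply_eq]
        · intro j _ hne
          simp [Matrix.blockDiagonal_apply_ne _ _ _ (Ne.symm hne)]
        · intro h; exact absurd (Finset.mem_univ _) h
      rw [Finset.sum_congr rfl fun q1 _ => h1 q1]
      rw [Fintype.sum_sum_type]
      cases u with
      | inl t =>
        have hst : s = t := by simpa using hs.symm
        subst hst
        simp only [hatMat, Matrix.fromBlocks_apply₁₁, Matrix.fromBlocks_apply₁₂]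
        rw [← Finset.sum_add_distrib]
        refine Finset.sum_congr rfl fun j _ => ?_
        simpa [matPos, matNeg] using abskey (Atil j0 s j)
      | inr t =>
        have hst : s = t := by simpa using hs.symm
        subst hst
        simp only [hatMat, Matrix.fromBlocks_apply₂₁, Matrix.fromBlocks_apply₂₂]
        rw [← Finset.sum_add_distrib]
        refine Finset.sum_congr rfl fun j _ => ?_
        have := abskey (Atil j0 s j)
        simp only [matPos, matNeg, Matrix.sub_apply]
        linarith [abs_nonneg (Atil j0 s j)]
    rw [hsum]
    rw [← hj0]; exact hrow i s
  refine ⟨key, ?_⟩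
  by_cases hNE : Nonempty ((Fin n ⊕ Fin n) × Fin N)
  · have hnn : ‖(Hs * Ahat).map (Complex.ofReal)‖₊ < 1 := by
      rw [Matrix.linfty_opNNNorm_def]
      rw [Finset.sup_lt_iff (by norm_num : (⊥ : NNReal) < 1)]
      intro p _
      have h2 : ((∑ q, ‖((Hs * Ahat).map Complex.ofReal) p q‖₊ : NNReal) : ℝ)
          = ∑ q, |(Hs * Ahat) p q| := by
        push_cast
        refine Finset.sum_congr rfl fun q _ => ?_
        simp [Matrix.map_apply, Real.norm_eq_abs]
      rw [← NNReal.coe_lt_coe]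
      rw [h2]
      simpa using key p
    haveI := hNE
    calc spectralRadius ℂ ((Hs * Ahat).map Complex.ofReal)
        ≤ ‖(Hs * Ahat).map Complex.ofReal‖₊ := spectrum.spectralRadius_le_nnnorm _
      _ < 1 := by exact_mod_cast hnn
  · rw [not_nonempty_iff] at hNE
    have : Subsingleton (Matrix ((Fin n ⊕ Fin n) × Fin N) ((Fin n ⊕ Fin n) × Fin N) ℂ) := by
      constructor; intro a b; ext p q; exact absurd (Nonempty.intro p) (not_nonempty_iff.mpr hNE)
    rw [specRad, spectrum.SpectralRadius.of_subsingleton]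
    norm_num
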